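/- Let R be a commutative ring, ι a finite type, B : Matrix ι ι R, and v : ℕ → (ι → R) a sequence of vectors satisfying B.mulVec (v 0) = v 1 and B.mulVec (v n) = v (n−1) + v (n+1) for all n ≥ 1. Define x : ι → R⟦t⟧ by letting the n-th coefficient of x i be (v n) i. Then for every i ∈ ι, in the formal power series ring R⟦t⟧: t · Σ_{j∈ι} B i j • x j = (1 + t²) · x i − (v 0) i, i.e. t·(B x) = (1 + t²)·x − v₀ componentwise. -/

import Mathlib

/-- If a sequence of vectors `v : ℕ → (ι → R)` satisfies `B v₀ = v₁` and
`B vₙ = v_{n-1} + v_{n+1}` for `n ≥ 1`, and `x i ∈ R⟦t⟧` is the power series whose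
`n`-th coefficient is `(v n) i`, then `t ⬝ (B x) = (1 + t²) ⬝ x − v₀` componentwise:
`t * ∑ j, B i j • x j = (1 + t²) * x i − C ((v 0) i)`. -/
theorem powerSeries_mckay_recurrence (R : Type*) [CommRing R] (ι : Type*) [Fintype ι]
    (B : Matrix ι ι R) (v : ℕ → ι → R)
    (h0 : B.mulVec (v 0) = v 1)
    (h1 : ∀ n, 1 ≤ n → B.mulVec (v n) = v (n - 1) + v (n + 1))
    (x : ι → PowerSeries R)
    (hx : ∀ i n, PowerSeries.coeff n (x i) = v n i) :
    ∀ i, (PowerSeries.X : PowerSeries R) * ∑ j, B i j • x j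
      = (1 + PowerSeries.X ^ 2) * x i - PowerSeries.C (v 0 i) := by
  intro i
  have key : ∀ m, (PowerSeries.coeff m) (∑ j, B i j • x j) = B.mulVec (v m) i := by
    intro m
    simp only [map_sum, PowerSeries.coeff_smul, hx, Matrix.mulVec, dotProduct,
      smul_eq_mul]
  ext n
  rw [add_mul, one_mul, pow_two, mul_assoc]
  match n with
  | 0 =>
    have h := hx i 0
    rw [PowerSeries.coeff_zero_eq_constantCoeff] at h
    simp [PowerSeries.coeff_zero_eq_constantCoeff, key, h]
  | 1 =>
    simp only [map_sub, map_add, PowerSeries.coeff_C]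
    rw [PowerSeries.coeff_succ_X_mul, PowerSeries.coeff_succ_X_mul, key, h0, hx]
    have h := hx i 0
    rw [PowerSeries.coeff_zero_eq_constantCoeff] at h
    simp [h]
  | (m + 2) =>
    simp only [map_sub, map_add]
    rw [PowerSeries.coeff_succ_X_mul, PowerSeries.coeff_succ_X_mul, key,
      h1 (m + 1) (Nat.le_add_left 1 m)]
    simp only [Nat.add_sub_cancel, Pi.add_apply]
    rw [PowerSeries.coeff_succ_X_mul, hx, hx, PowerSeries.coeff_C]
    simp
    ring
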